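/- With K : ℓ² → H bounded linear injective, f ∈ H, w_k ≥ w_0 > 0, and γ > 0: a point ū ∈ ℓ² minimizes Ψ(u) = ½‖Ku - f‖² + ∑_k w_k|u_k| if and only if ū = S_{γw}(ū - γK*(Kū - f)), where S_{γw} is coordinatewise soft-thresholding with weights γw_k. -/

import Mathlib

open scoped ENNReal

/-- `ℓ²`: square-summable real sequences. -/
noncomputable abbrev ellTwo := lp (fun _ : ℕ => ℝ) 2

/-- Scalar soft-thresholding: `S_w(x) = max(0, |x| - w) · sign(x)`. -/
noncomputable def softThresh (w x : ℝ) : ℝ := max 0 (|x| - w) * Real.sign x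

/-- The Tikhonov functional `Ψ(u) = ½‖Ku - f‖² + ∑_k w_k |u_k|`. -/
noncomputable def Psi {H : Type*} [NormedAddCommGroup H] [InnerProductSpace ℝ H]
    (K : ellTwo →L[ℝ] H) (f : H) (w : ℕ → ℝ) (u : ellTwo) : ℝ≥0∞ :=
  ENNReal.ofReal (‖K u - f‖ ^ 2 / 2) + ∑' k, ENNReal.ofReal (w k * |u k|)

/-- The subgradient condition at one coordinate. -/
def Pcond (w a x : ℝ) : Prop :=
  (0 < x → a = -w) ∧ (x < 0 → a = w) ∧ (x = 0 → |a| ≤ w)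

lemma softThresh_fixed_iff {γ w x a : ℝ} (hγ : 0 < γ) (hw : 0 < w) :
    x = softThresh (γ * w) (x - γ * a) ↔ Pcond w a x := by
  set y := x - γ * a with hy
  have hγw : 0 < γ * w := mul_pos hγ hw
  constructor
  · intro h
    rcases lt_trichotomy x 0 with hx | hx | hx
    · refine ⟨fun h' => absurd h' (by linarith), fun _ => ?_, fun h' => absurd h' (by linarith)⟩
      have hs : y < 0 := by
        by_contra hyn
        push_neg at hyn
        rcases eq_or_lt_of_le hyn with h0 | h0
        · rw [softThresh, ← h0, Real.sign_zero] at h; simp at h; linarith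
        · rw [softThresh, Real.sign_of_pos h0, mul_one] at h
          have := le_max_left (0:ℝ) (|y| - γ*w); linarith
      rw [softThresh, Real.sign_of_neg hs, abs_of_neg hs] at h
      have hmax : max 0 (-y - γ*w) = -y - γ*w := by
        rcases max_cases (0:ℝ) (-y - γ*w) with ⟨h1,h2⟩ | ⟨h1,h2⟩
        · rw [h1] at h; simp at h; linarith
        · exact h1
      rw [hmax] at h
      have : x = y + γ*w := by linarith [h]
      rw [hy] at this
      have : γ * a = γ * w := by linarith
      field_simp at this
      linarith
    · refine ⟨fun h' => absurd h' (by linarith), fun h' => absurd h' (by linarith), fun _ => ?_⟩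
      by_contra hab
      push_neg at hab
      have hya : γ * w < |y| := by
        rw [hy, hx]; simp [abs_mul, abs_of_pos hγ]
        nlinarith
      have hy0 : y ≠ 0 := by intro h0; rw [h0] at hya; simp at hya; linarith
      rcases lt_or_gt_of_ne hy0 with hyn | hyp
      · rw [softThresh, Real.sign_of_neg hyn, abs_of_neg hyn] at h
        have : max 0 (-y - γ*w) = -y - γ*w := max_eq_right (by rw [abs_of_neg hyn] at hya; linarith)
        rw [this] at h
        rw [abs_of_neg hyn] at hya
        nlinarith [h]
      · rw [softThresh, Real.sign_of_pos hyp, abs_of_pos hyp, mul_one] at h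
        have : max 0 (y - γ*w) = y - γ*w := max_eq_right (by rw [abs_of_pos hyp] at hya; linarith)
        rw [this] at h
        rw [abs_of_pos hyp] at hya
        linarith [h]
    · refine ⟨fun _ => ?_, fun h' => absurd h' (by linarith), fun h' => absurd h' (by linarith)⟩
      have hs : 0 < y := by
        by_contra hyn
        push_neg at hyn
        rcases eq_or_lt_of_le hyn with h0 | h0
        · rw [softThresh, h0, Real.sign_zero] at h; simp at h; linarith
        · rw [softThresh, Real.sign_of_neg h0] at h
          have := le_max_left (0:ℝ) (|y| - γ*w); nlinarith [h]
      rw [softThresh, Real.sign_of_pos hs, abs_of_pos hs, mul_one] at h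
      have hmax : max 0 (y - γ*w) = y - γ*w := by
        rcases max_cases (0:ℝ) (y - γ*w) with ⟨h1,h2⟩ | ⟨h1,h2⟩
        · rw [h1] at h; linarith
        · exact h1
      rw [hmax, hy] at h
      have : γ * a = γ * (-w) := by linarith
      have := mul_left_cancel₀ (ne_of_gt hγ) this
      linarith
  · rintro ⟨hp, hn, hz⟩
    rcases lt_trichotomy x 0 with hx | hx | hx
    · have ha := hn hx
      have hyv : y = x - γ*w := by rw [hy, ha]
      have hyneg : y < 0 := by nlinarith
      rw [softThresh, Real.sign_of_neg hyneg, abs_of_neg hyneg, hyv]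
      have : max 0 (-(x - γ*w) - γ*w) = -x := by
        rw [max_eq_right]; ring_nf; linarith
      rw [this]; ring
    · have ha := hz hx
      rw [hx, hy, hx, zero_sub]
      rcases lt_trichotomy a 0 with haneg | ha0 | hapos
      · have : 0 < -(γ*a) := by nlinarith
        rw [softThresh, Real.sign_of_pos this, abs_of_pos this, mul_one]
        rw [max_eq_left]
        rw [abs_of_neg haneg] at ha
        nlinarith
      · rw [ha0]; simp [softThresh]
      · have : -(γ*a) < 0 := by nlinarith
        rw [softThresh, Real.sign_of_neg this, abs_of_neg this]
        rw [max_eq_left]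
        · ring
        rw [abs_of_pos hapos] at ha
        nlinarith
    · have ha := hp hx
      have hyv : y = x + γ*w := by rw [hy, ha]; ring
      have hypos : 0 < y := by nlinarith
      rw [softThresh, Real.sign_of_pos hypos, abs_of_pos hypos, mul_one, hyv]
      rw [max_eq_right (by linarith)]
      ring

/-- Termwise inequality for the sufficiency direction. -/
lemma Pcond.term_nonneg {w a x : ℝ} (hw : 0 ≤ w) (hP : Pcond w a x) (u : ℝ) :
    0 ≤ a * (u - x) + w * (|u| - |x|) := by
  obtain ⟨hp, hn, hz⟩ := hP
  rcases lt_trichotomy x 0 with hx | hx | hx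
  · rw [hn hx, abs_of_neg hx]
    have := abs_nonneg u; have := neg_abs_le u; nlinarith
  · subst hx
    have h1 : |a| ≤ w := hz rfl
    simp only [sub_zero, abs_zero]
    have := le_abs_self u; have := neg_abs_le u
    have := le_abs_self a; have := neg_abs_le a
    nlinarith
  · rw [hp hx, abs_of_pos hx]
    have := le_abs_self u; nlinarith

/-- From the variational inequality at one coordinate, derive the subgradient condition. -/
lemma pcond_of_var {w c x a : ℝ} (hw : 0 < w) (hc : 0 ≤ c)
    (h : ∀ t : ℝ, 0 ≤ a * t + c * t ^ 2 / 2 + w * (|x + t| - |x|)) :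
    Pcond w a x := by
  have key : ∀ b s : ℝ, 0 < s → (∀ t : ℝ, 0 < t → t ≤ s → 0 ≤ b * t + c * t ^ 2 / 2) → 0 ≤ b := by
    intro b s hs hall
    by_contra hb
    push_neg at hb
    have ht0 : 0 < min s (-b / (c + 1)) := lt_min hs (div_pos (by linarith) (by linarith))
    have h1 := hall _ ht0 (min_le_left _ _)
    have h2 : min s (-b / (c + 1)) ≤ -b / (c + 1) := min_le_right _ _
    set t := min s (-b / (c + 1))
    have h3 : t * (c + 1) ≤ -b := (le_div_iff₀ (by linarith : (0:ℝ) < c + 1)).mp h2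
    nlinarith
  rcases lt_trichotomy x 0 with hx | hx | hx
  · refine ⟨fun h' => absurd h' (by linarith), fun _ => ?_, fun h' => absurd h' (by linarith)⟩
    have hgen : ∀ t : ℝ, |t| ≤ -x → 0 ≤ (a - w) * t + c * t ^ 2 / 2 := by
      intro t ht
      have hxt : x + t ≤ 0 := by cases abs_le.1 ht; linarith
      have := h t
      rw [abs_of_nonpos hxt, abs_of_neg hx] at this
      nlinarith
    have hpos : 0 ≤ a - w := key _ (-x) (by linarith) fun t ht1 ht2 =>
      hgen t (by rw [abs_of_pos ht1]; linarith)
    have hneg : 0 ≤ -(a - w) := key _ (-x) (by linarith) fun t ht1 ht2 => by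
      have := hgen (-t) (by rw [abs_neg, abs_of_pos ht1]; linarith)
      nlinarith
    linarith
  · refine ⟨fun h' => absurd h' (by linarith), fun h' => absurd h' (by linarith), fun _ => ?_⟩
    have hle : a ≤ w := by
      have := key (w - a) 1 one_pos fun t ht1 ht2 => by
        have := h (-t)
        rw [hx, zero_add, abs_neg, abs_of_pos ht1, abs_zero] at this
        nlinarith
      linarith
    have hge : -w ≤ a := by
      have := key (w + a) 1 one_pos fun t ht1 ht2 => by
        have := h t
        rw [hx, zero_add, abs_of_pos ht1, abs_zero] at this
        nlinarith
      linarith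
    exact abs_le.2 ⟨hge, hle⟩
  · refine ⟨fun _ => ?_, fun h' => absurd h' (by linarith), fun h' => absurd h' (by linarith)⟩
    have hgen : ∀ t : ℝ, |t| ≤ x → 0 ≤ (a + w) * t + c * t ^ 2 / 2 := by
      intro t ht
      have hxt : 0 ≤ x + t := by cases abs_le.1 ht; linarith
      have := h t
      rw [abs_of_nonneg hxt, abs_of_pos hx] at this
      nlinarith
    have hpos : 0 ≤ a + w := key _ x hx fun t ht1 ht2 =>
      hgen t (by rw [abs_of_pos ht1]; linarith)
    have hneg : 0 ≤ -(a + w) := key _ x hx fun t ht1 ht2 => by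
      have := hgen (-t) (by rw [abs_neg, abs_of_pos ht1]; linarith)
      nlinarith
    linarith

lemma summable_of_tsum_ofReal_ne_top {g : ℕ → ℝ} (hg : ∀ k, 0 ≤ g k)
    (h : ∑' k, ENNReal.ofReal (g k) ≠ ⊤) : Summable g := by
  have h2 : Summable (fun k => (g k).toNNReal) := ENNReal.tsum_coe_ne_top_iff_summable.mp h
  have h3 : (fun k => ((g k).toNNReal : ℝ)) = g := funext fun k => Real.coe_toNNReal _ (hg k)
  exact h3 ▸ NNReal.summable_coe.mpr h2

lemma Psi_eq_ofReal {H : Type*} [NormedAddCommGroup H] [InnerProductSpace ℝ H]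
    (K : ellTwo →L[ℝ] H) (f : H) (w : ℕ → ℝ) (u : ellTwo)
    (hwn : ∀ k, 0 ≤ w k) (hs : Summable fun k => w k * |u k|) :
    Psi K f w u = ENNReal.ofReal (‖K u - f‖ ^ 2 / 2 + ∑' k, w k * |u k|) := by
  have hn : ∀ k, 0 ≤ w k * |u k| := fun k => mul_nonneg (hwn k) (abs_nonneg _)
  rw [Psi, ← ENNReal.ofReal_tsum_of_nonneg hn hs,
    ← ENNReal.ofReal_add (by positivity) (tsum_nonneg hn)]

theorem stmt_11 {H : Type*} [NormedAddCommGroup H] [InnerProductSpace ℝ H]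
    [CompleteSpace H]
    (K : ellTwo →L[ℝ] H) (hK : Function.Injective K) (f : H)
    (w : ℕ → ℝ) (w0 : ℝ) (hw0 : 0 < w0) (hw : ∀ k, w0 ≤ w k)
    (γ : ℝ) (hγ : 0 < γ) (ubar : ellTwo) :
    (∀ u : ellTwo, Psi K f w ubar ≤ Psi K f w u) ↔
      ∀ k, ubar k = softThresh (γ * w k)
        (ubar k - γ * (ContinuousLinearMap.adjoint K (K ubar - f)) k) := by
  classical
  set A : ellTwo := ContinuousLinearMap.adjoint K (K ubar - f) with hA
  have hwk : ∀ k, 0 < w k := fun k => lt_of_lt_of_le hw0 (hw k)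
  have hwn : ∀ k, 0 ≤ w k := fun k => (hwk k).le
  have hAk : ∀ k, A k = @inner ℝ _ _ (K (lp.single 2 k (1:ℝ))) (K ubar - f) := by
    intro k
    rw [← ContinuousLinearMap.adjoint_inner_right K (lp.single 2 k (1:ℝ)) (K ubar - f), ← hA,
      lp.inner_single_left]
    simp [RCLike.inner_apply]
  have hiff : ∀ k, (ubar k = softThresh (γ * w k) (ubar k - γ * A k)) ↔
      Pcond (w k) (A k) (ubar k) := fun k => softThresh_fixed_iff hγ (hwk k)
  constructor
  · -- minimizer → fixed point
    intro hmin k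
    rw [hiff k]
    -- finiteness of Psi ubar
    have hzero : Psi K f w 0 ≠ ⊤ := by
      have : ∀ k, ENNReal.ofReal (w k * |(0 : ellTwo) k|) = 0 := by
        intro k
        rw [lp.coeFn_zero]
        simp
      rw [Psi]
      simp [this]
    have hfin : Psi K f w ubar ≠ ⊤ := ne_top_of_le_ne_top hzero (hmin 0)
    have hfin2 : ∑' j, ENNReal.ofReal (w j * |ubar j|) ≠ ⊤ :=
      ne_top_of_le_ne_top hfin le_add_self
    have hsub : Summable fun j => w j * |ubar j| :=
      summable_of_tsum_ofReal_ne_top (fun j => mul_nonneg (hwn j) (abs_nonneg _)) hfin2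
    set e : ellTwo := lp.single 2 k (1:ℝ) with he
    -- variational inequality
    have hvar : ∀ t : ℝ, 0 ≤ A k * t + ‖K e‖ ^ 2 * t ^ 2 / 2 +
        w k * (|ubar k + t| - |ubar k|) := by
      intro t
      set u' : ellTwo := ubar + t • e with hu'
      have hco : ∀ j, u' j = ubar j + t * (if j = k then 1 else 0) := by
        intro j
        rw [hu', lp.coeFn_add, Pi.add_apply, lp.coeFn_smul, Pi.smul_apply, smul_eq_mul]
        congr 1
        by_cases hj : j = k
        · subst hj; rw [lp.single_apply_self, if_pos rfl]
        · rw [lp.single_apply_ne 2 k _ hj, if_neg hj]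
      set δ : ℝ := w k * (|ubar k + t| - |ubar k|) with hδ
      have hfun : (fun j => w j * |u' j|) =
          fun j => w j * |ubar j| + (if j = k then δ else 0) := by
        funext j
        rw [hco j]
        by_cases hj : j = k
        · subst hj; rw [if_pos rfl, if_pos rfl, hδ]; ring
        · rw [if_neg hj, if_neg hj]; simp
      have hsδ : Summable fun j => (if j = k then δ else 0) := (hasSum_ite_eq k δ).summable
      have hsum' : Summable fun j => w j * |u' j| := by
        rw [hfun]; exact hsub.add hsδ
      have htsum' : ∑' j, w j * |u' j| = (∑' j, w j * |ubar j|) + δ := by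
        rw [hfun, hsub.tsum_add hsδ, tsum_ite_eq]
      have hle := hmin u'
      rw [Psi_eq_ofReal K f w ubar hwn hsub, Psi_eq_ofReal K f w u' hwn hsum'] at hle
      have hreal : ‖K ubar - f‖ ^ 2 / 2 + ∑' j, w j * |ubar j| ≤
          ‖K u' - f‖ ^ 2 / 2 + ∑' j, w j * |u' j| := by
        refine (ENNReal.ofReal_le_ofReal_iff ?_).mp hle
        have : (0:ℝ) ≤ ∑' j, w j * |u' j| :=
          tsum_nonneg fun j => mul_nonneg (hwn j) (abs_nonneg _)
        positivity
      rw [htsum'] at hreal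
      have hexp : ‖K u' - f‖ ^ 2 = ‖K ubar - f‖ ^ 2 +
          2 * (@inner ℝ _ _ (K ubar - f) (t • K e)) + ‖t • K e‖ ^ 2 := by
        rw [← norm_add_sq_real]
        congr 1
        rw [hu', map_add, map_smul]
        abel
      rw [hexp] at hreal
      rw [real_inner_smul_right, norm_smul] at hreal
      have hAke : A k = @inner ℝ _ _ (K ubar - f) (K e) := by
        rw [hAk k, real_inner_comm, he]
      rw [← hAke] at hreal
      simp only [norm_mul, Real.norm_eq_abs, mul_pow, sq_abs] at hreal
      nlinarith [hreal]
    exact pcond_of_var (hwk k) (by positivity) hvar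
  · -- fixed point → minimizer
    intro hfix u
    have hP : ∀ k, Pcond (w k) (A k) (ubar k) := fun k => (hiff k).mp (hfix k)
    by_cases hu : ∑' j, ENNReal.ofReal (w j * |u j|) = ⊤
    · have htop : Psi K f w u = ⊤ := by rw [Psi, hu]; simp
      rw [htop]; exact le_top
    · have hsum_u : Summable fun j => w j * |u j| :=
        summable_of_tsum_ofReal_ne_top (fun j => mul_nonneg (hwn j) (abs_nonneg _)) hu
      have hsumA : Summable fun j => (u j - ubar j) * A j := by
        have h1 := lp.summable_inner (𝕜 := ℝ) (u - ubar) A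
        have h2 : ∀ j, @inner ℝ _ _ ((u - ubar) j) (A j) = (u j - ubar j) * A j := by
          intro j
          rw [lp.coeFn_sub, Pi.sub_apply]
          simp [RCLike.inner_apply]; ring
        simpa [h2, mul_comm] using h1
      have hterm : ∀ j, 0 ≤ (u j - ubar j) * A j + w j * (|u j| - |ubar j|) := by
        intro j
        have := (hP j).term_nonneg (hwn j) (u j)
        nlinarith [this]
      have hsub : Summable fun j => w j * |ubar j| := by
        refine Summable.of_nonneg_of_le
          (fun j => mul_nonneg (hwn j) (abs_nonneg _))
          (fun j => ?_) (hsum_u.add hsumA)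
        have := hterm j
        simp only
        nlinarith [this]
      have hwdiff : Summable fun j => w j * (|u j| - |ubar j|) := by
        have : (fun j => w j * (|u j| - |ubar j|)) =
            fun j => w j * |u j| - w j * |ubar j| := by funext j; ring
        rw [this]
        exact hsum_u.sub hsub
      -- key nonneg sum
      have hS : 0 ≤ (∑' j, (u j - ubar j) * A j) + ∑' j, w j * (|u j| - |ubar j|) := by
        rw [← hsumA.tsum_add hwdiff]
        exact tsum_nonneg hterm
      -- inner product identity
      have hip : @inner ℝ _ _ (K (u - ubar)) (K ubar - f) = ∑' j, (u j - ubar j) * A j := by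
        rw [← ContinuousLinearMap.adjoint_inner_right K (u - ubar) (K ubar - f), ← hA,
          lp.inner_eq_tsum]
        refine tsum_congr fun j => ?_
        rw [lp.coeFn_sub, Pi.sub_apply]
        simp [RCLike.inner_apply]; ring
      have hwd : ∑' j, w j * (|u j| - |ubar j|) =
          (∑' j, w j * |u j|) - ∑' j, w j * |ubar j| := by
        have : (fun j => w j * (|u j| - |ubar j|)) =
            fun j => w j * |u j| - w j * |ubar j| := by funext j; ring
        rw [this, hsum_u.tsum_sub hsub]
      have hexp : ‖K u - f‖ ^ 2 = ‖K ubar - f‖ ^ 2 +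
          2 * (@inner ℝ _ _ (K ubar - f) (K (u - ubar))) + ‖K (u - ubar)‖ ^ 2 := by
        have hd : K u - f = (K ubar - f) + K (u - ubar) := by rw [map_sub]; abel
        rw [hd, norm_add_sq_real]
      rw [Psi_eq_ofReal K f w ubar hwn hsub, Psi_eq_ofReal K f w u hwn hsum_u]
      apply ENNReal.ofReal_le_ofReal
      have hcomm : @inner ℝ _ _ (K ubar - f) (K (u - ubar)) =
          @inner ℝ _ _ (K (u - ubar)) (K ubar - f) := real_inner_comm _ _
      rw [hwd] at hS
      rw [hexp, hcomm, hip]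
      nlinarith [hS, sq_nonneg ‖K (u - ubar)‖]
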